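/- Let β ∈ [1,2), let k ∈ ℕ with n := β·2^k ∈ ℕ, and let (c,b) ∈ C(β) be k-feasible with c_0 > 0 and b ≤ k−1. Then there exists a k-feasible sequence α ∈ A^{≤k}(c,b). -/

import Mathlib

/-- The binary entropy function, `h(p) = p log₂(1/p) + (1-p) log₂(1/(1-p))`,
with the convention `h(0) = h(1) = 0` (automatic since `1/0 = 0` and `logb 2 0 = 0`). -/
noncomputable def binH (p : ℝ) : ℝ :=
  p * Real.logb 2 (1 / p) + (1 - p) * Real.logb 2 (1 / (1 - p))

/-- `(c, b) ∈ C(β)`: `c : ℕ → [0,1]`, `∑ cᵢ/2ⁱ = 1/(β·2ᵇ)` and `∑ cᵢ ≤ 1`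
(the latter expressed via partial sums, which is equivalent for nonnegative terms). -/
def memC (β : ℝ) (c : ℕ → ℝ) (b : ℕ) : Prop :=
  (∀ i, c i ∈ Set.Icc (0 : ℝ) 1) ∧
  (∑' i : ℕ, c i / 2 ^ i) = 1 / (β * 2 ^ b) ∧
  ∀ n : ℕ, (∑ i ∈ Finset.range n, c i) ≤ 1

/-- `α ∈ A(c,b)`: `α : ℕ → [0,1]` with `∑ αᵢ cᵢ / 2ⁱ = 1/(β·2^{b+1})`. -/
def memA (β : ℝ) (b : ℕ) (c α : ℕ → ℝ) : Prop :=
  (∀ i, α i ∈ Set.Icc (0 : ℝ) 1) ∧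
  (∑' i : ℕ, α i * c i / 2 ^ i) = 1 / (β * 2 ^ (b + 1))

/-- `P(c,α) = ∑ h(αᵢ)·cᵢ − h(∑ αᵢ·cᵢ)`. -/
noncomputable def Pfun (c α : ℕ → ℝ) : ℝ :=
  (∑' i : ℕ, binH (α i) * c i) - binH (∑' i : ℕ, α i * c i)

/-- `sup_{α ∈ A(c,b)} P(c,α)`. -/
noncomputable def supP (β : ℝ) (b : ℕ) (c : ℕ → ℝ) : ℝ :=
  sSup {y | ∃ α, memA β b c α ∧ y = Pfun c α}

/-- `G(β) = inf_{(c,b) ∈ C(β)} sup_{α ∈ A(c,b)} P(c,α)`. -/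
noncomputable def Gfun (β : ℝ) : ℝ :=
  sInf {y | ∃ c b, memC β c b ∧ y = supP β b c}

/-- `(c,b)` is `k`-feasible: `cᵢ · β · 2ᵏ ∈ ℕ` for every `i`. -/
def kFeasC (β : ℝ) (k : ℕ) (c : ℕ → ℝ) : Prop :=
  ∀ i, ∃ m : ℕ, c i * (β * 2 ^ k) = m

/-- `α` is `k`-feasible (for `c`): `αᵢ · cᵢ · β · 2ᵏ ∈ ℕ` for every `i`, and if there is
a largest index `t` with `c t > 0` then `α t < 1`. -/
def kFeasA (β : ℝ) (k : ℕ) (c α : ℕ → ℝ) : Prop :=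
  (∀ i, ∃ m : ℕ, α i * c i * (β * 2 ^ k) = m) ∧
  (∀ t, 0 < c t → (∀ i, t < i → c i = 0) → α t < 1)

open Finset
/-- Greedy remainder sequence. -/
def grRem (m : ℕ → ℕ) (N : ℕ) : ℕ → ℕ
  | 0 => N
  | j+1 => 2 * (grRem m N j - min (m j) (grRem m N j))

lemma grRem_pos_down (m : ℕ → ℕ) (N : ℕ) :
    ∀ j, 0 < grRem m N j → ∀ i, i ≤ j → 0 < grRem m N i := by
  intro j
  induction j with
  | zero => intro h i hi; rcases Nat.le_zero.mp hi; exact h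
  | succ j ih =>
    intro h i hi
    have hj : 0 < grRem m N j := by
      have h' : grRem m N (j+1) = 2 * (grRem m N j - min (m j) (grRem m N j)) := rfl
      omega
    rcases Nat.le_succ_iff.mp hi with h1 | h1
    · exact ih hj i h1
    · rwa [h1]

lemma grRem_succ_pos_min (m : ℕ → ℕ) (N : ℕ) (j : ℕ) (h : 0 < grRem m N (j+1)) :
    min (m j) (grRem m N j) = m j := by
  have h' : grRem m N (j+1) = 2 * (grRem m N j - min (m j) (grRem m N j)) := rfl
  omega

lemma grRem_sum (m : ℕ → ℕ) (N : ℕ) :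
    ∀ j, ∑ i ∈ range j, ((min (m i) (grRem m N i) : ℕ) : ℝ) / 2 ^ i
      = (N : ℝ) - (grRem m N j : ℝ) / 2 ^ j := by
  intro j
  induction j with
  | zero => simp [grRem]
  | succ j ih =>
    rw [Finset.sum_range_succ, ih]
    have h1 : grRem m N (j+1) = 2 * (grRem m N j - min (m j) (grRem m N j)) := rfl
    have h2 : min (m j) (grRem m N j) ≤ grRem m N j := Nat.min_le_right _ _
    have h3 : ((grRem m N (j+1) : ℕ) : ℝ)
        = 2 * ((grRem m N j : ℝ) - ((min (m j) (grRem m N j) : ℕ) : ℝ)) := by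
      rw [h1]; push_cast [Nat.cast_sub h2]; ring
    rw [h3]
    have h4 : (2:ℝ) ^ j ≠ 0 := by positivity
    field_simp
    ring

lemma grRem_zero_of_ge (m : ℕ → ℕ) (N : ℕ) (K : ℕ) (h : grRem m N K = 0) :
    ∀ j, K ≤ j → grRem m N j = 0 := by
  intro j hj
  induction j with
  | zero => rcases Nat.le_zero.mp hj; exact h
  | succ j ih =>
    rcases Nat.le_succ_iff.mp hj with h1 | h1
    · have := ih h1
      show 2 * (grRem m N j - min (m j) (grRem m N j)) = 0
      omega
    · subst h1; exact h

set_option maxHeartbeats 2000000 in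
/-- If `(c,b) ∈ C(β)` is `k`-feasible with `c₀ > 0` and `b ≤ k−1` (for `n = β·2^k ∈ ℕ`),
then there exists a `k`-feasible `α ∈ A^{≤k}(c,b)`. -/
theorem exists_kfeasible_alpha (β : ℝ) (hβ : β ∈ Set.Ico (1 : ℝ) 2)
    (k n : ℕ) (hn : (n : ℝ) = β * 2 ^ k)
    (c : ℕ → ℝ) (b : ℕ) (hC : memC β c b) (hfeas : kFeasC β k c)
    (hc0 : 0 < c 0) (hb : (b : ℤ) ≤ (k : ℤ) - 1) :
    ∃ α : ℕ → ℝ, memA β b c α ∧ (∀ i, k < i → α i = 0) ∧ kFeasA β k c α := by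
  obtain ⟨hβ1, hβ2⟩ := hβ
  have hβ0 : (0:ℝ) < β := by linarith
  have npos : (0:ℝ) < n := by rw [hn]; positivity
  have hnne : (n:ℝ) ≠ 0 := ne_of_gt npos
  -- integer values m i = c i * n
  choose m hm using hfeas
  have hcm : ∀ i, c i = (m i : ℝ) / n := by
    intro i
    rw [eq_div_iff hnne, hn]; exact hm i
  obtain ⟨d, hd⟩ : ∃ d, k = b + 1 + d := ⟨k - (b+1), by omega⟩
  set N : ℕ := 2 ^ d with hNdef
  have hN1 : 1 ≤ N := Nat.one_le_two_pow
  have hNr : (N : ℝ) = 2 ^ d := by rw [hNdef]; push_cast; ring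
  have hkr : (2:ℝ) ^ k = 2 ^ b * 2 * 2 ^ d := by
    rw [hd, pow_add, pow_add]; ring
  -- summability facts
  have hc0' : ∀ i, 0 ≤ c i := fun i => (hC.1 i).1
  have hc1 : ∀ i, c i ≤ 1 := fun i => (hC.1 i).2
  have hsc : Summable c := summable_of_sum_range_le hc0' hC.2.2
  have htsum_c_le : (∑' i, c i) ≤ 1 := Summable.tsum_le_of_sum_range_le hsc hC.2.2
  have hscd : Summable (fun i => c i / 2 ^ i) := by
    have hg : Summable (fun i : ℕ => (1/2 : ℝ) ^ i) :=
      summable_geometric_of_lt_one (by norm_num) (by norm_num)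
    refine Summable.of_nonneg_of_le
      (fun i => div_nonneg (hc0' i) (by positivity)) (fun i => ?_) hg
    rw [div_pow, one_pow]
    have h2 : (0:ℝ) < 2 ^ i := by positivity
    rw [div_le_div_iff₀ h2 h2]
    nlinarith [hc1 i, h2]
  -- tail bounds
  have htailc : (∑' i, c (i + (k+1))) ≤ 1 := by
    have h := Summable.sum_add_tsum_nat_add (f := c) (k+1) hsc
    have h2 : 0 ≤ ∑ i ∈ range (k+1), c i := Finset.sum_nonneg (fun i _ => hc0' i)
    linarith
  have htail : (∑' i, c (i + (k+1)) / 2 ^ (i + (k+1))) ≤ 1 / 2 ^ (k+1) := by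
    have hs2 : Summable (fun i => c (i + (k+1))) := (summable_nat_add_iff (k+1)).2 hsc
    have hsd2 : Summable (fun i => c (i + (k+1)) / 2 ^ (i + (k+1))) :=
      (summable_nat_add_iff (k+1)).2 hscd
    have h1 : ∀ i, c (i + (k+1)) / 2 ^ (i + (k+1)) ≤ c (i + (k+1)) * (1 / 2 ^ (k+1)) := by
      intro i
      rw [mul_one_div]
      apply div_le_div_of_nonneg_left (hc0' _) (by positivity)
      exact pow_le_pow_right₀ (by norm_num) (by omega)
    calc (∑' i, c (i + (k+1)) / 2 ^ (i + (k+1)))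
        ≤ ∑' i, c (i + (k+1)) * (1 / 2 ^ (k+1)) :=
          Summable.tsum_le_tsum h1 hsd2 (hs2.mul_right _)
      _ = (∑' i, c (i + (k+1))) * (1 / 2 ^ (k+1)) := tsum_mul_right
      _ ≤ 1 * (1 / 2 ^ (k+1)) := by
          apply mul_le_mul_of_nonneg_right htailc (by positivity)
      _ = 1 / 2 ^ (k+1) := one_mul _
  -- key lower bound for the head sum of m
  have e2 : ∑ i ∈ range (k+1), c i / 2 ^ i
      = 1 / (β * 2 ^ b) - ∑' i, c (i + (k+1)) / 2 ^ (i + (k+1)) := by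
    have h := Summable.sum_add_tsum_nat_add (f := fun i => c i / 2 ^ i) (k+1) hscd
    rw [hC.2.1] at h
    linarith
  have e1 : ∑ i ∈ range (k+1), (m i : ℝ) / 2 ^ i
      = n * ∑ i ∈ range (k+1), c i / 2 ^ i := by
    rw [Finset.mul_sum]
    apply Finset.sum_congr rfl
    intro i _
    rw [hcm i]; field_simp
  have hn2N : (n:ℝ) * (1 / (β * 2 ^ b)) = 2 * N := by
    rw [hn, hkr, hNr]; field_simp
  have hnhalf : (n:ℝ) * (1 / 2 ^ (k+1)) = β / 2 := by
    rw [hn]; field_simp [pow_succ]; ring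
  have hS1 : (N : ℝ) < ∑ i ∈ range (k+1), (m i : ℝ) / 2 ^ i := by
    rw [e1, e2]
    have h3 : (n:ℝ) * (1 / (β * 2 ^ b) - ∑' i, c (i + (k+1)) / 2 ^ (i + (k+1)))
        ≥ 2 * N - β / 2 := by
      have := mul_le_mul_of_nonneg_left htail (le_of_lt npos)
      rw [hnhalf] at this
      nlinarith [hn2N]
    have hN1r : (1:ℝ) ≤ N := by exact_mod_cast hN1
    nlinarith
  -- the greedy remainder vanishes by step k+1
  have hrz : grRem m N (k+1) = 0 := by
    by_contra hne
    have hpos : 0 < grRem m N (k+1) := Nat.pos_of_ne_zero hne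
    have hall : ∀ j ∈ range (k+1),
        ((min (m j) (grRem m N j) : ℕ) : ℝ) / 2 ^ j = (m j : ℝ) / 2 ^ j := by
      intro j hj
      rw [grRem_succ_pos_min m N j
        (grRem_pos_down m N (k+1) hpos (j+1) (by
          have := Finset.mem_range.mp hj; omega))]
    have hsum := grRem_sum m N (k+1)
    rw [Finset.sum_congr rfl hall] at hsum
    have hrge : (0:ℝ) ≤ (grRem m N (k+1) : ℝ) / 2 ^ (k+1) := by positivity
    linarith
  have hrzall : ∀ j, k < j → grRem m N j = 0 := fun j hj =>
    grRem_zero_of_ge m N (k+1) hrz j (by omega)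
  have ha0 : ∀ j, k < j → min (m j) (grRem m N j) = 0 := by
    intro j hj; rw [hrzall j hj]; simp
  have hsumN : ∑ i ∈ range (k+1), ((min (m i) (grRem m N i) : ℕ) : ℝ) / 2 ^ i = N := by
    have := grRem_sum m N (k+1)
    rw [hrz] at this; simpa using this
  -- define α
  obtain ⟨a, ha_eq⟩ : ∃ a : ℕ → ℕ, ∀ i, a i = min (m i) (grRem m N i) :=
    ⟨_, fun i => rfl⟩
  set α : ℕ → ℝ := fun i => if m i = 0 then 0 else (a i : ℝ) / m i with hαdef
  have hαzero : ∀ i, k < i → α i = 0 := by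
    intro i hi
    simp only [hαdef]
    split
    · rfl
    · rw [ha_eq i, ha0 i hi]; simp
  have hαc : ∀ i, α i * c i = (a i : ℝ) / n := by
    intro i
    simp only [hαdef]
    by_cases h : m i = 0
    · have ha : a i = 0 := by rw [ha_eq i, h]; simp
      rw [if_pos h, ha, hcm i, h]
      simp
    · rw [if_neg h, hcm i]
      have : (m i : ℝ) ≠ 0 := by exact_mod_cast h
      field_simp
  have hαmem : ∀ i, α i ∈ Set.Icc (0:ℝ) 1 := by
    intro i
    simp only [hαdef]
    split
    · exact ⟨le_refl 0, by norm_num⟩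
    · rename_i h
      have hmi : (0:ℝ) < m i := by
        have : 0 < m i := Nat.pos_of_ne_zero h
        exact_mod_cast this
      constructor
      · positivity
      · rw [div_le_one hmi]
        have hle : a i ≤ m i := ha_eq i ▸ Nat.min_le_left _ _
        exact_mod_cast hle
  have htsumα : (∑' i, α i * c i / 2 ^ i) = 1 / (β * 2 ^ (b+1)) := by
    have hzero : ∀ i ∉ range (k+1), α i * c i / 2 ^ i = 0 := by
      intro i hi
      have : k < i := by have := Finset.mem_range.not.mp hi; omega
      rw [hαzero i this]; ring
    rw [tsum_eq_sum hzero]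
    have : ∑ i ∈ range (k+1), α i * c i / 2 ^ i
        = (∑ i ∈ range (k+1), (a i : ℝ) / 2 ^ i) / n := by
      rw [Finset.sum_div]
      apply Finset.sum_congr rfl
      intro i _
      rw [hαc i]; ring
    have hsumN' : ∑ i ∈ range (k+1), ((a i : ℕ) : ℝ) / 2 ^ i = N := by
      simp only [ha_eq]; exact hsumN
    rw [this, hsumN']
    rw [hn, hkr, hNr]
    have hb2 : (0:ℝ) < 2 ^ b := by positivity
    have hd2 : (0:ℝ) < 2 ^ d := by positivity
    field_simp [pow_succ]
    ring
  refine ⟨α, ⟨hαmem, htsumα⟩, hαzero, ?_, ?_⟩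
  · intro i
    refine ⟨a i, ?_⟩
    rw [← hn, hαc i]
    field_simp
  · intro t hct htl
    have hmt : 0 < m t := by
      by_contra h
      have : m t = 0 := by omega
      rw [hcm t, this] at hct
      simp at hct
    have hmtr : (0:ℝ) < m t := by exact_mod_cast hmt
    have hgoal : a t < m t → α t < 1 := by
      intro h
      simp only [hαdef]
      rw [if_neg (by omega)]
      rw [div_lt_one hmtr]
      exact_mod_cast h
    apply hgoal
    by_contra hcon
    have hat : a t = m t := le_antisymm (ha_eq t ▸ Nat.min_le_left _ _) (by omega)
    rcases lt_or_ge k t with hkt | hkt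
    · have h0 := ha0 t hkt
      have h1 := ha_eq t
      omega
    · -- t ≤ k : all a j = m j for j ≤ t, contradiction with total mass 2N
      have hrt : 0 < grRem m N t := by
        have h2 : a t ≤ grRem m N t := ha_eq t ▸ Nat.min_le_right _ _
        omega
      have hallj : ∀ j, j ≤ t → a j = m j := by
        intro j hj
        rcases Nat.lt_or_ge j t with h1 | h1
        · rw [ha_eq j]
          exact grRem_succ_pos_min m N j (grRem_pos_down m N t hrt (j+1) (by omega))
        · have : j = t := by omega
          rw [this]; exact hat
      have hsum1 : ∑ i ∈ range (t+1), ((a i : ℕ) : ℝ) / 2 ^ i ≤ N := by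
        have hgs := grRem_sum m N (t+1)
        have hrge : (0:ℝ) ≤ (grRem m N (t+1) : ℝ) / 2 ^ (t+1) := by positivity
        simp only [ha_eq]
        linarith [hgs]
      have hsum2 : ∑ i ∈ range (t+1), ((a i : ℕ) : ℝ) / 2 ^ i = 2 * N := by
        have e3 : ∑ i ∈ range (t+1), ((a i : ℕ) : ℝ) / 2 ^ i
            = ∑ i ∈ range (t+1), (m i : ℝ) / 2 ^ i := by
          apply Finset.sum_congr rfl
          intro i hi
          rw [hallj i (by have := Finset.mem_range.mp hi; omega)]
        have e4 : ∑ i ∈ range (t+1), (m i : ℝ) / 2 ^ i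
            = n * ∑ i ∈ range (t+1), c i / 2 ^ i := by
          rw [Finset.mul_sum]
          apply Finset.sum_congr rfl
          intro i _
          rw [hcm i]; field_simp
        have e5 : (∑' i, c i / 2 ^ i) = ∑ i ∈ range (t+1), c i / 2 ^ i := by
          apply tsum_eq_sum
          intro i hi
          have : t < i := by have := Finset.mem_range.not.mp hi; omega
          rw [htl i this]; ring
        rw [e3, e4, ← e5, hC.2.1, hn2N]
      have hN1r : (1:ℝ) ≤ N := by exact_mod_cast hN1
      linarith
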